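/- Continuous improvement theorem: let ν be a σ-finite measure on Y, π_ref a strictly positive probability density w.r.t. ν, π_prop a probability density, ε > 0, and τ > 0 such that π*(y) = min((1+ε)π_prop(y), τ·π_ref(y)) integrates to 1. Let h = π_prop/π_ref and suppose u : Y → ℝ is bounded measurable and comonotone with h ν-a.e., i.e. (u(y)-u(y'))(h(y)-h(y')) ≥ 0 for a.e. (y,y'). Then ∫ π*(y)·u(y) dν(y) ≥ ∫ π_ref(y)·u(y) dν(y). -/

import Mathlib

open MeasureTheory

set_option maxHeartbeats 1000000 in
theorem stmt_19 {Y : Type*} [MeasurableSpace Y] (ν : Measure Y) [SigmaFinite ν]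
    (πref πprop u : Y → ℝ) (ε τ : ℝ)
    (hrefm : Measurable πref) (hpropm : Measurable πprop) (hum : Measurable u)
    (href0 : ∀ᵐ y ∂ν, 0 < πref y) (href : ∀ y, 0 ≤ πref y)
    (hprop : ∀ y, 0 ≤ πprop y)
    (hrefi : Integrable πref ν) (hpropi : Integrable πprop ν)
    (hrefs : ∫ y, πref y ∂ν = 1) (hprops : ∫ y, πprop y ∂ν = 1)
    (hε : 0 < ε) (hτ : 0 < τ)
    (hnorm : ∫ y, min ((1 + ε) * πprop y) (τ * πref y) ∂ν = 1)
    (hub : ∃ C : ℝ, ∀ y, |u y| ≤ C)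
    (hcom : ∀ᵐ z ∂(ν.prod ν),
      (u z.1 - u z.2) * (πprop z.1 / πref z.1 - πprop z.2 / πref z.2) ≥ 0) :
    ∫ y, min ((1 + ε) * πprop y) (τ * πref y) * u y ∂ν
      ≥ ∫ y, πref y * u y ∂ν := by
  obtain ⟨C, hC⟩ := hub
  have hubd : ∃ C : ℝ, ∀ y, ‖u y‖ ≤ C := ⟨C, fun y => hC y⟩
  -- abbreviations
  set p : Y → ℝ := fun y => min ((1 + ε) * πprop y) (τ * πref y) with hpdef
  set g : Y → ℝ := fun y => p y - πref y with hgdef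
  have hε1 : (0:ℝ) ≤ 1 + ε := by linarith
  have hpm : Measurable p := (hpropm.const_mul _).min (hrefm.const_mul _)
  have hp0 : ∀ y, 0 ≤ p y := fun y =>
    le_min (mul_nonneg hε1 (hprop y)) (mul_nonneg hτ.le (href y))
  have hpi : Integrable p ν := by
    refine (hrefi.const_mul τ).mono hpm.aestronglyMeasurable (ae_of_all _ fun y => ?_)
    rw [Real.norm_eq_abs, Real.norm_eq_abs, abs_of_nonneg (hp0 y),
      abs_of_nonneg (mul_nonneg hτ.le (href y))]
    exact min_le_right _ _
  have hgi : Integrable g ν := hpi.sub hrefi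
  have hgm : Measurable g := hpm.sub hrefm
  have hgint : ∫ y, g y ∂ν = 0 := by
    have : ∫ y, g y ∂ν = (∫ y, p y ∂ν) - ∫ y, πref y ∂ν := integral_sub hpi hrefi
    rw [this, hpdef, hnorm, hrefs]; ring
  have hugi : Integrable (fun y => u y * g y) ν :=
    hgi.bdd_mul hum.aestronglyMeasurable (ae_of_all _ fun y => hC y)
  have huri : Integrable (fun y => u y * πref y) ν :=
    hrefi.bdd_mul hum.aestronglyMeasurable (ae_of_all _ fun y => hC y)
  set I := ∫ y, u y * g y ∂ν with hIdef
  -- the double integral equals 2 * I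
  have i1 : Integrable (fun z : Y × Y => u z.1 * g z.1 * πref z.2) (ν.prod ν) :=
    hugi.mul_prod hrefi
  have i2 : Integrable (fun z : Y × Y => u z.1 * πref z.1 * g z.2) (ν.prod ν) :=
    huri.mul_prod hgi
  have i3 : Integrable (fun z : Y × Y => g z.1 * (u z.2 * πref z.2)) (ν.prod ν) :=
    hgi.mul_prod huri
  have i4 : Integrable (fun z : Y × Y => πref z.1 * (u z.2 * g z.2)) (ν.prod ν) :=
    hrefi.mul_prod hugi
  have T1 : ∫ z : Y × Y, u z.1 * g z.1 * πref z.2 ∂(ν.prod ν) = I := by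
    have h := integral_prod_mul (μ := ν) (ν := ν) (fun y => u y * g y) πref
    simpa [hrefs, ← hIdef] using h
  have T2 : ∫ z : Y × Y, u z.1 * πref z.1 * g z.2 ∂(ν.prod ν) = 0 := by
    have h := integral_prod_mul (μ := ν) (ν := ν) (fun y => u y * πref y) g
    simpa [hgint] using h
  have T3 : ∫ z : Y × Y, g z.1 * (u z.2 * πref z.2) ∂(ν.prod ν) = 0 := by
    have h := integral_prod_mul (μ := ν) (ν := ν) g (fun y => u y * πref y)
    simpa [hgint] using h
  have T4 : ∫ z : Y × Y, πref z.1 * (u z.2 * g z.2) ∂(ν.prod ν) = I := by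
    have h := integral_prod_mul (μ := ν) (ν := ν) πref (fun y => u y * g y)
    simpa [hrefs, ← hIdef] using h
  have hG : ∫ z, (u z.1 - u z.2) * (g z.1 * πref z.2 - g z.2 * πref z.1) ∂(ν.prod ν)
      = 2 * I := by
    have heq : (fun z : Y × Y => (u z.1 - u z.2) * (g z.1 * πref z.2 - g z.2 * πref z.1))
        = fun z : Y × Y =>
          ((u z.1 * g z.1 * πref z.2 - u z.1 * πref z.1 * g z.2)
            - (g z.1 * (u z.2 * πref z.2) - πref z.1 * (u z.2 * g z.2))) := by
      funext z; ring
    rw [heq]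
    calc ∫ z : Y × Y, ((u z.1 * g z.1 * πref z.2 - u z.1 * πref z.1 * g z.2)
            - (g z.1 * (u z.2 * πref z.2) - πref z.1 * (u z.2 * g z.2))) ∂(ν.prod ν)
        = (∫ z : Y × Y, (u z.1 * g z.1 * πref z.2 - u z.1 * πref z.1 * g z.2) ∂(ν.prod ν))
          - ∫ z : Y × Y, (g z.1 * (u z.2 * πref z.2) - πref z.1 * (u z.2 * g z.2)) ∂(ν.prod ν) :=
          integral_sub (i1.sub i2) (i3.sub i4)
      _ = ((∫ z : Y × Y, u z.1 * g z.1 * πref z.2 ∂(ν.prod ν))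
            - ∫ z : Y × Y, u z.1 * πref z.1 * g z.2 ∂(ν.prod ν))
          - ((∫ z : Y × Y, g z.1 * (u z.2 * πref z.2) ∂(ν.prod ν))
            - ∫ z : Y × Y, πref z.1 * (u z.2 * g z.2) ∂(ν.prod ν)) := by
          rw [integral_sub i1 i2, integral_sub i3 i4]
      _ = 2 * I := by rw [T1, T2, T3, T4]; ring
  -- a.e. positivity of coordinates on the product
  have hfst : ∀ᵐ z ∂(ν.prod ν), 0 < πref z.1 := by
    rw [ae_iff] at href0 ⊢
    have hs : {z : Y × Y | ¬ 0 < πref z.1} = {y | ¬ 0 < πref y} ×ˢ Set.univ := by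
      ext z; simp
    rw [hs, Measure.prod_prod, href0, zero_mul]
  have hsnd : ∀ᵐ z ∂(ν.prod ν), 0 < πref z.2 := by
    rw [ae_iff] at href0 ⊢
    have hs : {z : Y × Y | ¬ 0 < πref z.2} = Set.univ ×ˢ {y | ¬ 0 < πref y} := by
      ext z; simp
    rw [hs, Measure.prod_prod, href0, mul_zero]
  -- a.e. nonnegativity of the double integrand
  have hGnn : ∀ᵐ z ∂(ν.prod ν),
      0 ≤ (u z.1 - u z.2) * (g z.1 * πref z.2 - g z.2 * πref z.1) := by
    filter_upwards [hfst, hsnd, hcom] with z hr1 hr2 hc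
    have hkey : g z.1 * πref z.2 - g z.2 * πref z.1
        = min ((1 + ε) * πprop z.1 * πref z.2) (τ * πref z.1 * πref z.2)
          - min ((1 + ε) * πprop z.2 * πref z.1) (τ * πref z.1 * πref z.2) := by
      simp only [hgdef, hpdef]
      rw [sub_mul, sub_mul, min_mul_of_nonneg _ _ hr2.le, min_mul_of_nonneg _ _ hr1.le]
      ring_nf
    have hdiff : πprop z.1 / πref z.1 - πprop z.2 / πref z.2
        = (πprop z.1 * πref z.2 - πref z.1 * πprop z.2) / (πref z.1 * πref z.2) :=
      div_sub_div _ _ hr1.ne' hr2.ne'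
    have hrr : 0 < πref z.1 * πref z.2 := mul_pos hr1 hr2
    rcases lt_trichotomy (πprop z.1 * πref z.2) (πref z.1 * πprop z.2) with hlt | heq | hgt
    · -- h z.1 < h z.2, so u z.1 - u z.2 ≤ 0 and the min-difference is ≤ 0
      have hqneg : πprop z.1 / πref z.1 - πprop z.2 / πref z.2 < 0 := by
        rw [hdiff]; exact div_neg_of_neg_of_pos (by linarith) hrr
      have ha : u z.1 - u z.2 ≤ 0 := by
        by_contra hcon
        push_neg at hcon
        nlinarith [mul_pos hcon (neg_pos.mpr hqneg)]
      have hd : g z.1 * πref z.2 - g z.2 * πref z.1 ≤ 0 := by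
        rw [hkey, sub_nonpos]
        exact min_le_min (by nlinarith [mul_le_mul_of_nonneg_left hlt.le hε1]) le_rfl
      nlinarith [mul_nonneg (neg_nonneg.mpr ha) (neg_nonneg.mpr hd)]
    · have hd : g z.1 * πref z.2 - g z.2 * πref z.1 = 0 := by
        rw [hkey]
        have : (1 + ε) * πprop z.1 * πref z.2 = (1 + ε) * πprop z.2 * πref z.1 := by
          linear_combination (1 + ε) * heq
        rw [this]; ring
      rw [hd, mul_zero]
    · have hqpos : 0 < πprop z.1 / πref z.1 - πprop z.2 / πref z.2 := by
        rw [hdiff]; exact div_pos (by linarith) hrr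
      have ha : 0 ≤ u z.1 - u z.2 := by
        by_contra hcon
        push_neg at hcon
        nlinarith [mul_pos (neg_pos.mpr hcon) hqpos]
      have hd : 0 ≤ g z.1 * πref z.2 - g z.2 * πref z.1 := by
        rw [hkey, sub_nonneg]
        exact min_le_min (by nlinarith [mul_le_mul_of_nonneg_left hgt.le hε1]) le_rfl
      exact mul_nonneg ha hd
  have hI : 0 ≤ I := by
    have h2 : 0 ≤ 2 * I := hG ▸ integral_nonneg_of_ae hGnn
    linarith
  -- conclude
  have hpui : Integrable (fun y => p y * u y) ν :=
    (hpi.bdd_mul hum.aestronglyMeasurable (ae_of_all _ fun y => hC y)).congr (ae_of_all _ fun y => mul_comm _ _)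
  have hrui : Integrable (fun y => πref y * u y) ν :=
    huri.congr (ae_of_all _ fun y => mul_comm _ _)
  rw [ge_iff_le, ← sub_nonneg, ← integral_sub hpui hrui]
  have : (fun y => p y * u y - πref y * u y) = fun y => u y * g y := by
    funext y; simp only [hgdef]; ring
  rw [this]
  exact hI
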